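/- If Σ: U ⊆ TM → M is a local addition on a smooth manifold M and τ: T(TM) → T(TM) is the canonical flip, then TΣ ∘ τ, defined on τ(TU), is a local addition on TM. In particular, if M admits a local addition then so does TM. -/

import Mathlib

/- STATEMENT 7: if locAdd : U ⊆ TM → M is a local addition on M and τ is the canonical
flip of T(TM) (encoded through its characterising properties: a smooth involution with
T(π_M) ∘ τ = π_TM and τ ∘ T0_M = 0_TM), then T(locAdd) ∘ τ, defined on τ(TU), is a local
addition on TM.  In particular, if M admits a local addition then so does TM. -/

open Bundle Manifold

noncomputable section

/-- A local addition on a manifold `N`: a smooth map `locAdd : U → N` defined on an open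
neighbourhood `U` of the zero section in `TN`, with `locAdd (0_x) = x`, such that
`(π, locAdd)` is a diffeomorphism from `U` onto an open neighbourhood of the diagonal. -/
def IsLocalAddition {E : Type*} [NormedAddCommGroup E] [NormedSpace ℝ E]
    {HH : Type*} [TopologicalSpace HH] (I : ModelWithCorners ℝ E HH)
    (N : Type*) [TopologicalSpace N] [ChartedSpace HH N] [IsManifold I (⊤ : ℕ∞) N]
    (locAdd : TangentBundle I N → N) (U : Set (TangentBundle I N)) : Prop :=
  IsOpen U ∧ (∀ x : N, (⟨x, 0⟩ : TangentBundle I N) ∈ U) ∧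
  (∀ x : N, locAdd ⟨x, 0⟩ = x) ∧
  ContMDiffOn I.tangent I (⊤ : ℕ∞) locAdd U ∧
  ∃ V : Set (N × N), IsOpen V ∧ (∀ x : N, (x, x) ∈ V) ∧
    Set.BijOn (fun v => (v.proj, locAdd v)) U V ∧
    ∃ ρ : N × N → TangentBundle I N, ContMDiffOn (I.prod I) I.tangent (⊤ : ℕ∞) ρ V ∧
      ∀ v ∈ U, ρ (v.proj, locAdd v) = v

/-- A local addition is adapted to a submersion `s : N → M` if it maps every vector in its
domain that is tangent to an `s`-fibre (i.e. in the kernel of `Ts`) into the same fibre. -/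
def AdaptedTo {E : Type*} [NormedAddCommGroup E] [NormedSpace ℝ E]
    {HH : Type*} [TopologicalSpace HH] (I : ModelWithCorners ℝ E HH)
    {N : Type*} [TopologicalSpace N] [ChartedSpace HH N]
    {F : Type*} [NormedAddCommGroup F] [NormedSpace ℝ F]
    {HM : Type*} [TopologicalSpace HM] (IM : ModelWithCorners ℝ F HM)
    {M : Type*} [TopologicalSpace M] [ChartedSpace HM M]
    (s : N → M) (locAdd : TangentBundle I N → N) (U : Set (TangentBundle I N)) : Prop :=
  ∀ v ∈ U, mfderiv I IM s v.proj v.2 = 0 → s (locAdd v) = s v.proj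

section Aux

open Set Filter

variable {E : Type*} [NormedAddCommGroup E] [NormedSpace ℝ E]
  {E' : Type*} [NormedAddCommGroup E'] [NormedSpace ℝ E']
  {H : Type*} [TopologicalSpace H] {I : ModelWithCorners ℝ E H}
  {H' : Type*} [TopologicalSpace H'] {I' : ModelWithCorners ℝ E' H'}
  {M : Type*} [TopologicalSpace M] [ChartedSpace H M] [IsManifold I (⊤ : ℕ∞) M]
  {M' : Type*} [TopologicalSpace M'] [ChartedSpace H' M'] [IsManifold I' (⊤ : ℕ∞) M']

omit [IsManifold I (⊤ : ℕ∞) M] [IsManifold I' (⊤ : ℕ∞) M'] in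
theorem my_tangentMap_congr {f g : M → M'} {p : TangentBundle I M} (h : f =ᶠ[nhds p.proj] g) :
    tangentMap I I' f p = tangentMap I I' g p := by
  have h0 : f p.proj = g p.proj := h.eq_of_nhds
  have h1 : mfderiv I I' f p.proj = mfderiv I I' g p.proj := h.mfderiv_eq
  unfold tangentMap
  rw [h1, h0]

omit [IsManifold I (⊤ : ℕ∞) M] in
theorem my_tangentMap_eq_id {f : M → M} {p : TangentBundle I M} (h : f =ᶠ[nhds p.proj] id) :
    tangentMap I I f p = p := by
  rw [my_tangentMap_congr h, tangentMap_id, id]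

/-- fibre component of the tangent-bundle trivialization of a product manifold -/
theorem my_triv_prod_snd {x₀ : M} {y₀ : M'} (x : M) (y : M') (v : E) (w : E')
    (hx : x ∈ (chartAt H x₀).source) (hy : y ∈ (chartAt H' y₀).source) :
    (trivializationAt (E × E') (TangentSpace (I.prod I')) (x₀, y₀)
        ⟨(x, y), (v, w)⟩).2 =
      ((trivializationAt E (TangentSpace I) x₀ ⟨x, v⟩).2,
       (trivializationAt E' (TangentSpace I') y₀ ⟨y, w⟩).2) := by
  set F₁ := (chartAt H x₀).extend I ∘ ((chartAt H x).extend I).symm with hF₁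
  set F₂ := (chartAt H' y₀).extend I' ∘ ((chartAt H' y).extend I').symm with hF₂
  set pt₁ := (chartAt H x).extend I x with hpt₁
  set pt₂ := (chartAt H' y).extend I' y with hpt₂
  have h₁ : ContDiffWithinAt ℝ ((⊤ : ℕ∞) : WithTop ℕ∞) F₁ (Set.range I) pt₁ :=
    OpenPartialHomeomorph.contDiffWithinAt_extend_coord_change'
      (IsManifold.chart_mem_maximalAtlas x)
      (IsManifold.chart_mem_maximalAtlas x₀) (mem_chart_source H x) hx
  have h₂ : ContDiffWithinAt ℝ ((⊤ : ℕ∞) : WithTop ℕ∞) F₂ (Set.range I') pt₂ :=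
    OpenPartialHomeomorph.contDiffWithinAt_extend_coord_change'
      (IsManifold.chart_mem_maximalAtlas y)
      (IsManifold.chart_mem_maximalAtlas y₀) (mem_chart_source H' y) hy
  set D₁ := fderivWithin ℝ F₁ (Set.range I) pt₁ with hD₁
  set D₂ := fderivWithin ℝ F₂ (Set.range I') pt₂ with hD₂
  have hd₁ : HasFDerivWithinAt F₁ D₁ (Set.range I) pt₁ :=
    (h₁.differentiableWithinAt (by simp)).hasFDerivWithinAt
  have hd₂ : HasFDerivWithinAt F₂ D₂ (Set.range I') pt₂ :=
    (h₂.differentiableWithinAt (by simp)).hasFDerivWithinAt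
  have hprod : HasFDerivWithinAt (fun z : E × E' => (F₁ z.1, F₂ z.2))
      ((D₁.comp (ContinuousLinearMap.fst ℝ E E')).prod
        (D₂.comp (ContinuousLinearMap.snd ℝ E E')))
      (Set.range I ×ˢ Set.range I') (pt₁, pt₂) :=
    HasFDerivWithinAt.prodMk (HasFDerivWithinAt.comp (pt₁, pt₂) hd₁ hasFDerivWithinAt_fst (fun z (hz : z ∈ Set.range I ×ˢ Set.range I') => hz.1))
      (HasFDerivWithinAt.comp (pt₁, pt₂) hd₂ hasFDerivWithinAt_snd fun z (hz : z ∈ Set.range I ×ˢ Set.range I') => hz.2)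
  have hu : UniqueDiffWithinAt ℝ (Set.range I ×ˢ Set.range I') (pt₁, pt₂) :=
    (I.uniqueDiffOn.prod I'.uniqueDiffOn) _ ⟨⟨chartAt H x x, rfl⟩, ⟨chartAt H' y y, rfl⟩⟩
  have main : fderivWithin ℝ
      ((chartAt (ModelProd H H') (x₀, y₀)).extend (I.prod I') ∘
        ((chartAt (ModelProd H H') (x, y)).extend (I.prod I')).symm)
      (Set.range (I.prod I'))
      ((chartAt (ModelProd H H') (x, y)).extend (I.prod I') (x, y)) =
      ((D₁.comp (ContinuousLinearMap.fst ℝ E E')).prod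
        (D₂.comp (ContinuousLinearMap.snd ℝ E E'))) := by
    rw [ModelWithCorners.range_prod]
    exact hprod.fderivWithin hu
  calc (trivializationAt (E × E') (TangentSpace (I.prod I')) (x₀, y₀) ⟨(x, y), (v, w)⟩).2
      = fderivWithin ℝ
        ((chartAt (ModelProd H H') (x₀, y₀)).extend (I.prod I') ∘
          ((chartAt (ModelProd H H') (x, y)).extend (I.prod I')).symm)
        (Set.range (I.prod I'))
        ((chartAt (ModelProd H H') (x, y)).extend (I.prod I') (x, y)) (v, w) := rfl
    _ = (D₁ v, D₂ w) := by rw [main]; rfl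
    _ = _ := rfl

/-- Smoothness of the canonical map `TM × TM' → T(M × M')`. -/
theorem my_contMDiff_xi :
    ContMDiff (I.tangent.prod I'.tangent) (I.prod I').tangent (⊤ : ℕ∞)
      (fun ab : TangentBundle I M × TangentBundle I' M' =>
        (⟨(ab.1.proj, ab.2.proj), (ab.1.2, ab.2.2)⟩ :
          TangentBundle (I.prod I') (M × M'))) := by
  rintro ⟨a₀, b₀⟩
  rw [Bundle.contMDiffAt_totalSpace]
  constructor
  · exact (((Bundle.contMDiff_proj _).comp contMDiff_fst).prodMk
      ((Bundle.contMDiff_proj _).comp contMDiff_snd)).contMDiffAt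
  · have hg₁ : ContMDiffAt I.tangent 𝓘(ℝ, E) (⊤ : ℕ∞)
        (fun a : TangentBundle I M => (trivializationAt E (TangentSpace I) a₀.proj a).2) a₀ :=
      ((Bundle.contMDiffAt_totalSpace
        (f := (id : TangentBundle I M → TotalSpace E (TangentSpace I))) (x₀ := a₀)).mp contMDiffAt_id).2
    have hg₂ : ContMDiffAt I'.tangent 𝓘(ℝ, E') (⊤ : ℕ∞)
        (fun b : TangentBundle I' M' => (trivializationAt E' (TangentSpace I') b₀.proj b).2) b₀ :=
      ((Bundle.contMDiffAt_totalSpace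
        (f := (id : TangentBundle I' M' → TotalSpace E' (TangentSpace I'))) (x₀ := b₀)).mp contMDiffAt_id).2
    refine ContMDiffAt.congr_of_eventuallyEq
      ((hg₁.comp _ contMDiffAt_fst).prodMk_space (hg₂.comp _ contMDiffAt_snd)) ?_
    have hmem : {ab : TangentBundle I M × TangentBundle I' M' |
        ab.1.proj ∈ (chartAt H a₀.proj).source ∧ ab.2.proj ∈ (chartAt H' b₀.proj).source}
        ∈ nhds (a₀, b₀) := by
      refine IsOpen.mem_nhds ?_ ⟨mem_chart_source _ _, mem_chart_source _ _⟩
      exact IsOpen.inter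
        (((chartAt H a₀.proj).open_source.preimage
            ((FiberBundle.continuous_proj E (TangentSpace I)).comp continuous_fst)))
        (((chartAt H' b₀.proj).open_source.preimage
            ((FiberBundle.continuous_proj E' (TangentSpace I')).comp continuous_snd)))
    filter_upwards [hmem] with ab hab
    exact my_triv_prod_snd (I := I) (I' := I') _ _ _ _ hab.1 hab.2

end Aux
theorem tangent_bundle_local_addition
    {E : Type*} [NormedAddCommGroup E] [NormedSpace ℝ E]
    {HM : Type*} [TopologicalSpace HM] (I : ModelWithCorners ℝ E HM)
    (M : Type*) [TopologicalSpace M] [ChartedSpace HM M] [IsManifold I (⊤ : ℕ∞) M]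
    (locAdd : TangentBundle I M → M) (U : Set (TangentBundle I M))
    (hla : IsLocalAddition I M locAdd U)
    -- the canonical flip τ of T(TM), through its characterising properties
    (τ : TangentBundle I.tangent (TangentBundle I M) →
         TangentBundle I.tangent (TangentBundle I M))
    (hτ_smooth : ContMDiff I.tangent.tangent I.tangent.tangent (⊤ : ℕ∞) τ)
    (hτ_invol : ∀ w, τ (τ w) = w)
    (hτ_proj : ∀ w, tangentMap I.tangent I
        (Bundle.TotalSpace.proj : TangentBundle I M → M) (τ w) = w.proj)
    (hτ_zero : ∀ v : TangentBundle I M,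
        τ (tangentMap I I.tangent (fun m => (⟨m, 0⟩ : TangentBundle I M)) v) =
          (⟨v, 0⟩ : TangentBundle I.tangent (TangentBundle I M))) :
    IsLocalAddition I.tangent (TangentBundle I M)
      (fun w => tangentMap I.tangent I locAdd (τ w))
      (τ '' {w | w.proj ∈ U}) := by
  obtain ⟨hU_open, hU_zero, hzero, hsmooth, V, hV_open, hV_diag, hbij, ρ, hρ_smooth, hρ_left⟩ := hla
  have hproj_cont : Continuous (Bundle.TotalSpace.proj :
      TangentBundle I.tangent (TangentBundle I M) → TangentBundle I M) :=
    FiberBundle.continuous_proj _ _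
  have hproj_cont' : Continuous (Bundle.TotalSpace.proj : TangentBundle I M → M) :=
    FiberBundle.continuous_proj _ _
  have hTU_open : IsOpen {w : TangentBundle I.tangent (TangentBundle I M) | w.proj ∈ U} :=
    hU_open.preimage hproj_cont
  have himg : τ '' {w | w.proj ∈ U} = τ ⁻¹' {w | w.proj ∈ U} := by
    ext w
    constructor
    · rintro ⟨u, hu, rfl⟩
      show (τ (τ u)).proj ∈ U
      rw [hτ_invol]
      exact hu
    · intro hw
      exact ⟨τ w, hw, hτ_invol w⟩
  -- differentiability facts
  have hlocAdd_diff : ∀ v ∈ U, MDifferentiableAt I.tangent I locAdd v :=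
    fun v hv => ((hsmooth v hv).contMDiffAt (hU_open.mem_nhds hv)).mdifferentiableAt (by simp)
  have hφ_smooth : ContMDiffOn I.tangent (I.prod I) (⊤ : ℕ∞)
      (fun v : TangentBundle I M => (v.proj, locAdd v)) U :=
    (Bundle.contMDiffOn_proj (TangentSpace I)).prodMk hsmooth
  have hφ_diff : ∀ v ∈ U, MDifferentiableAt I.tangent (I.prod I)
      (fun v : TangentBundle I M => (v.proj, locAdd v)) v :=
    fun v hv => ((hφ_smooth v hv).contMDiffAt (hU_open.mem_nhds hv)).mdifferentiableAt (by simp)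
  have hρ_diff : ∀ p ∈ V, MDifferentiableAt (I.prod I) I.tangent ρ p :=
    fun p hp => ((hρ_smooth p hp).contMDiffAt (hV_open.mem_nhds hp)).mdifferentiableAt (by simp)
  have hρV : ∀ p ∈ V, ρ p ∈ U ∧ ((ρ p).proj, locAdd (ρ p)) = p := by
    intro p hp
    obtain ⟨v, hv, hφv⟩ := hbij.surjOn hp
    have hρp : ρ p = v := by rw [← hφv]; exact hρ_left v hv
    rw [hρp]; exact ⟨hv, hφv⟩
  -- the two chain-rule inverse identities
  have L1 : ∀ u : TangentBundle I.tangent (TangentBundle I M), u.proj ∈ U →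
      tangentMap (I.prod I) I.tangent ρ
        (tangentMap I.tangent (I.prod I) (fun v => (v.proj, locAdd v)) u) = u := by
    intro u hu
    rw [← tangentMap_comp_at u (hρ_diff _ (hbij.mapsTo hu)) (hφ_diff _ hu)]
    refine my_tangentMap_eq_id ?_
    filter_upwards [hU_open.mem_nhds hu] with v hv
    exact hρ_left v hv
  have L2 : ∀ q : TangentBundle (I.prod I) (M × M), q.proj ∈ V →
      tangentMap I.tangent (I.prod I) (fun v => (v.proj, locAdd v))
        (tangentMap (I.prod I) I.tangent ρ q) = q := by
    intro q hq
    rw [← tangentMap_comp_at q (hφ_diff _ (hρV _ hq).1) (hρ_diff _ hq)]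
    refine my_tangentMap_eq_id ?_
    filter_upwards [hV_open.mem_nhds hq] with p hp
    exact (hρV p hp).2
  have hτproj : ∀ u : TangentBundle I.tangent (TangentBundle I M),
      (τ u).proj = tangentMap I.tangent I Bundle.TotalSpace.proj u := by
    intro u
    conv_rhs => rw [← hτ_invol u]
    exact (hτ_proj (τ u)).symm
  -- the key pointwise identity
  have key : ∀ u : TangentBundle I.tangent (TangentBundle I M), u.proj ∈ U →
      ((τ u).proj, tangentMap I.tangent I locAdd (τ (τ u))) =
        ((⟨(tangentMap I.tangent (I.prod I) (fun v => (v.proj, locAdd v)) u).proj.1,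
          ((tangentMap I.tangent (I.prod I) (fun v => (v.proj, locAdd v)) u).2 : E × E).1⟩ :
            TangentBundle I M),
         (⟨(tangentMap I.tangent (I.prod I) (fun v => (v.proj, locAdd v)) u).proj.2,
          ((tangentMap I.tangent (I.prod I) (fun v => (v.proj, locAdd v)) u).2 : E × E).2⟩ :
            TangentBundle I M)) := by
    intro u hu
    have h1 : tangentMap (I.prod I) I Prod.fst
        (tangentMap I.tangent (I.prod I) (fun v => (v.proj, locAdd v)) u) =
        tangentMap I.tangent I Bundle.TotalSpace.proj u := by
      rw [← tangentMap_comp_at u mdifferentiableAt_fst (hφ_diff _ hu)]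
      rfl
    have h2 : tangentMap (I.prod I) I Prod.snd
        (tangentMap I.tangent (I.prod I) (fun v => (v.proj, locAdd v)) u) =
        tangentMap I.tangent I locAdd u := by
      rw [← tangentMap_comp_at u mdifferentiableAt_snd (hφ_diff _ hu)]
      rfl
    rw [hτ_invol, hτproj u, ← h1, ← h2, tangentMap_prodFst, tangentMap_prodSnd]
  refine ⟨?_, ?_, ?_, ?_, ?_⟩
  · rw [himg]
    exact hTU_open.preimage hτ_smooth.continuous
  · intro x
    exact ⟨tangentMap I I.tangent (fun m => (⟨m, 0⟩ : TangentBundle I M)) x,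
      hU_zero x.proj, hτ_zero x⟩
  · intro x
    show tangentMap I.tangent I locAdd (τ ⟨x, 0⟩) = x
    have hz : τ (⟨x, 0⟩ : TangentBundle I.tangent (TangentBundle I M)) =
        tangentMap I I.tangent (fun m => (⟨m, 0⟩ : TangentBundle I M)) x := by
      rw [← hτ_zero x, hτ_invol]
    have hzdiff : MDifferentiableAt I I.tangent
        (fun m => (⟨m, 0⟩ : TangentBundle I M)) x.proj :=
      ((Bundle.contMDiff_zeroSection ℝ (TangentSpace I) (n := ((⊤ : ℕ∞) : WithTop ℕ∞))) x.proj).mdifferentiableAt (by simp)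
    rw [hz, ← tangentMap_comp_at x (hlocAdd_diff _ (hU_zero x.proj)) hzdiff]
    exact my_tangentMap_eq_id (Filter.Eventually.of_forall fun m => hzero m)
  · -- smoothness
    have htm : ContMDiffOn I.tangent.tangent I.tangent (⊤ : ℕ∞)
        (tangentMap I.tangent I locAdd) {w | w.proj ∈ U} := by
      have h := hsmooth.contMDiffOn_tangentMapWithin (m := ((⊤ : ℕ∞) : WithTop ℕ∞)) (by simp) hU_open.uniqueMDiffOn
      exact h.congr fun p hp =>
        (tangentMapWithin_eq_tangentMap (hU_open.uniqueMDiffOn _ hp)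
          (hlocAdd_diff _ hp)).symm
    refine ContMDiffOn.comp htm hτ_smooth.contMDiffOn ?_
    rintro w ⟨u, hu, rfl⟩
    exact Set.mem_preimage.mpr (by rw [hτ_invol]; exact hu)
  · refine ⟨{p : TangentBundle I M × TangentBundle I M | (p.1.proj, p.2.proj) ∈ V},
      ?_, ?_, ⟨?_, ?_, ?_⟩, ?_⟩
    · exact hV_open.preimage ((hproj_cont'.comp continuous_fst).prodMk
        (hproj_cont'.comp continuous_snd))
    · intro x
      exact hV_diag x.proj
    · -- MapsTo
      rintro w ⟨u, hu, rfl⟩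
      show (((τ u).proj).proj, (tangentMap I.tangent I locAdd (τ (τ u))).proj) ∈ V
      have h2 : (((τ u).proj).proj, (tangentMap I.tangent I locAdd (τ (τ u))).proj) =
          ((tangentMap I.tangent (I.prod I) (fun v => (v.proj, locAdd v)) u).proj.1,
           (tangentMap I.tangent (I.prod I) (fun v => (v.proj, locAdd v)) u).proj.2) :=
        congrArg (fun q : TangentBundle I M × TangentBundle I M =>
          (q.1.proj, q.2.proj)) (key u hu)
      rw [h2]
      exact hbij.mapsTo hu
    · -- InjOn
      rintro w₁ ⟨u₁, hu₁, rfl⟩ w₂ ⟨u₂, hu₂, rfl⟩ heq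
      have e : ((τ u₁).proj, tangentMap I.tangent I locAdd (τ (τ u₁))) =
          ((τ u₂).proj, tangentMap I.tangent I locAdd (τ (τ u₂))) := heq
      have e2 := (key u₁ hu₁).symm.trans (e.trans (key u₂ hu₂))
      have e3 : tangentMap I.tangent (I.prod I) (fun v => (v.proj, locAdd v)) u₁ =
          tangentMap I.tangent (I.prod I) (fun v => (v.proj, locAdd v)) u₂ := by
        have c1 := congrArg (fun q : TangentBundle I M × TangentBundle I M =>
            ((q.1.proj, q.2.proj), ((q.1.2 : E), (q.2.2 : E)))) e2
        exact congrArg (fun z : (M × M) × E × E =>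
          (⟨z.1, z.2⟩ : TangentBundle (I.prod I) (M × M))) c1
      have : u₁ = u₂ := by rw [← L1 u₁ hu₁, ← L1 u₂ hu₂, e3]
      rw [this]
    · -- SurjOn
      intro p hp
      have hq : ((⟨(p.1.proj, p.2.proj), (p.1.2, p.2.2)⟩ :
          TangentBundle (I.prod I) (M × M))).proj ∈ V := hp
      have hu' : (tangentMap (I.prod I) I.tangent ρ
          (⟨(p.1.proj, p.2.proj), (p.1.2, p.2.2)⟩ :
            TangentBundle (I.prod I) (M × M))).proj ∈ U := (hρV _ hp).1
      refine ⟨τ (tangentMap (I.prod I) I.tangent ρ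
          (⟨(p.1.proj, p.2.proj), (p.1.2, p.2.2)⟩ : TangentBundle (I.prod I) (M × M))),
        ⟨tangentMap (I.prod I) I.tangent ρ
          (⟨(p.1.proj, p.2.proj), (p.1.2, p.2.2)⟩ : TangentBundle (I.prod I) (M × M)),
          hu', rfl⟩, ?_⟩
      show ((τ _).proj, tangentMap I.tangent I locAdd (τ (τ _))) = p
      rw [key _ hu', L2 _ hq]
    · -- smooth inverse
      refine ⟨fun p => τ (tangentMap (I.prod I) I.tangent ρ
          (⟨(p.1.proj, p.2.proj), (p.1.2, p.2.2)⟩ : TangentBundle (I.prod I) (M × M))),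
        ?_, ?_⟩
      · have htmρ : ContMDiffOn (I.prod I).tangent I.tangent.tangent (⊤ : ℕ∞)
            (tangentMap (I.prod I) I.tangent ρ)
            {q : TangentBundle (I.prod I) (M × M) | q.proj ∈ V} := by
          have h := hρ_smooth.contMDiffOn_tangentMapWithin (m := ((⊤ : ℕ∞) : WithTop ℕ∞)) (by simp) hV_open.uniqueMDiffOn
          exact h.congr fun q hq =>
            (tangentMapWithin_eq_tangentMap (hV_open.uniqueMDiffOn _ hq)
              (hρ_diff _ hq)).symm
        exact hτ_smooth.comp_contMDiffOn
          (htmρ.comp (my_contMDiff_xi (I := I) (I' := I) (M := M) (M' := M)).contMDiffOn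
            (fun p hp => hp))
      · rintro w ⟨u, hu, rfl⟩
        show τ (tangentMap (I.prod I) I.tangent ρ _) = τ u
        rw [key u hu]
        exact congrArg τ (L1 u hu)
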